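/- For D ≥ 1 and φ ∈ (0, π/2], the integral ∫₀^φ sin^D(t) dt ≤ [√π · Γ((D+1)/2) / Γ(1+D/2)] · sin^D(φ). -/

import Mathlib

open Real intervalIntegral

/-- The full-period sine power integral in terms of Gamma. -/
lemma sin_pow_integral_gamma (D : ℕ) :
    ∫ x in (0:ℝ)..Real.pi, Real.sin x ^ D =
      Real.sqrt Real.pi * Real.Gamma (((D : ℝ) + 1) / 2) /
        Real.Gamma (1 + (D : ℝ) / 2) := by
  induction D using Nat.twoStepInduction with
  | zero =>
      have h : Real.sqrt Real.pi * Real.sqrt Real.pi = Real.pi :=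
        Real.mul_self_sqrt Real.pi_pos.le
      norm_num [Real.Gamma_one, Real.Gamma_one_half_eq]
      linarith
  | one =>
      have hG : Real.Gamma ((3:ℝ)/2) = (1/2) * Real.sqrt Real.pi := by
        rw [show (3:ℝ)/2 = 1/2 + 1 by ring, Real.Gamma_add_one (by norm_num),
          Real.Gamma_one_half_eq]
      have hπ : (0:ℝ) < Real.sqrt Real.pi := Real.sqrt_pos.mpr Real.pi_pos
      simp only [Nat.cast_one, pow_one]
      rw [integral_sin]
      have e : ((1:ℝ)+1)/2 = 1 := by norm_num
      have e2 : (1:ℝ) + 1/2 = 3/2 := by norm_num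
      rw [e, e2, Real.Gamma_one, hG]
      rw [Real.cos_pi, Real.cos_zero]
      field_simp
      norm_num
  | more n ih _ =>
      have hrec := integral_sin_pow n (a := 0) (b := Real.pi)
      rw [Real.sin_zero, Real.sin_pi] at hrec
      norm_num at hrec
      have hrec' : (∫ x in (0:ℝ)..Real.pi, Real.sin x ^ (n+2)) =
          ((n:ℝ)+1)/((n:ℝ)+2) * ∫ x in (0:ℝ)..Real.pi, Real.sin x ^ n := by
        rw [hrec]
      rw [hrec', ih]
      have hG1 : (0:ℝ) < Real.Gamma (((n:ℝ)+1)/2) :=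
        Real.Gamma_pos_of_pos (by positivity)
      have hG2 : (0:ℝ) < Real.Gamma (1 + (n:ℝ)/2) :=
        Real.Gamma_pos_of_pos (by positivity)
      have e1 : (((n:ℕ)+2 : ℕ) : ℝ) = (n:ℝ) + 2 := by push_cast; ring
      -- Gamma (((n+2)+1)/2) = ((n+1)/2) * Gamma ((n+1)/2)
      have h1 : Real.Gamma ((((n:ℝ)+2) + 1)/2) = (((n:ℝ)+1)/2) * Real.Gamma (((n:ℝ)+1)/2) := by
        have : (((n:ℝ)+2)+1)/2 = ((n:ℝ)+1)/2 + 1 := by ring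
        rw [this, Real.Gamma_add_one (by positivity)]
      -- Gamma (1 + (n+2)/2) = (1 + n/2) * Gamma (1 + n/2)
      have h2 : Real.Gamma (1 + ((n:ℝ)+2)/2) = (1 + (n:ℝ)/2) * Real.Gamma (1 + (n:ℝ)/2) := by
        have : 1 + ((n:ℝ)+2)/2 = (1 + (n:ℝ)/2) + 1 := by ring
        rw [this, Real.Gamma_add_one (by positivity)]
      rw [e1, h1, h2]
      have hn2 : ((n:ℝ)+2) ≠ 0 := by positivity
      field_simp
      ring

set_option maxHeartbeats 1000000 in
/-- Bound on the integral of sin^D over [0, φ]. -/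
theorem stmt_14 {D : ℕ} (hD : 1 ≤ D) (φ : ℝ) (hφ0 : 0 < φ) (hφ : φ ≤ Real.pi / 2) :
    ∫ t in (0 : ℝ)..φ, (Real.sin t) ^ D ≤
      Real.sqrt Real.pi * Real.Gamma (((D : ℝ) + 1) / 2) /
        Real.Gamma (1 + (D : ℝ) / 2) * (Real.sin φ) ^ D := by
  set C : ℝ := Real.sqrt Real.pi * Real.Gamma (((D : ℝ) + 1) / 2) /
      Real.Gamma (1 + (D : ℝ) / 2) with hCdef
  have hC : ∫ x in (0:ℝ)..Real.pi, Real.sin x ^ D = C := sin_pow_integral_gamma D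
  have hCpos : 0 < C := hC ▸ integral_sin_pow_pos _
  -- C * C' = 2π/(D+1) where C' is the constant for D+1
  set C' : ℝ := Real.sqrt Real.pi * Real.Gamma (((D : ℝ) + 1 + 1) / 2) /
      Real.Gamma (1 + ((D : ℝ) + 1) / 2) with hC'def
  have hC' : ∫ x in (0:ℝ)..Real.pi, Real.sin x ^ (D+1) = C' := by
    have := sin_pow_integral_gamma (D+1)
    push_cast at this
    exact this
  have hC'pos : 0 < C' := hC' ▸ integral_sin_pow_pos _
  have hC'le : C' ≤ C := by
    rw [← hC, ← hC']; exact integral_sin_pow_succ_le _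
  have hprod : C * C' = 2 * Real.pi / ((D:ℝ) + 1) := by
    have hG1 : (0:ℝ) < Real.Gamma (((D:ℝ)+1)/2) := Real.Gamma_pos_of_pos (by positivity)
    have hG2 : (0:ℝ) < Real.Gamma (1 + (D:ℝ)/2) := Real.Gamma_pos_of_pos (by positivity)
    have e1 : Real.Gamma (((D:ℝ)+1+1)/2) = Real.Gamma (1 + (D:ℝ)/2) := by
      congr 1; ring
    have e2 : Real.Gamma (1 + ((D:ℝ)+1)/2) = (((D:ℝ)+1)/2) * Real.Gamma (((D:ℝ)+1)/2) := by
      have : 1 + ((D:ℝ)+1)/2 = ((D:ℝ)+1)/2 + 1 := by ring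
      rw [this, Real.Gamma_add_one (by positivity)]
    have hπ : Real.sqrt Real.pi * Real.sqrt Real.pi = Real.pi :=
      Real.mul_self_sqrt Real.pi_pos.le
    set g1 := Real.Gamma (((D:ℝ)+1)/2) with hg1
    set g2 := Real.Gamma (1 + (D:ℝ)/2) with hg2
    rw [hCdef, hC'def, e1, e2]
    have hD1 : ((D:ℝ)+1) ≠ 0 := by positivity
    field_simp
    linear_combination hπ
  have hCCD : 2 ≤ C^2 * D := by
    have hπ3 : (3:ℝ) ≤ Real.pi := by
      have := Real.pi_gt_d6; linarith
    have hD1 : (1:ℝ) ≤ (D:ℝ) := by exact_mod_cast hD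
    have h1 : 2 * Real.pi / ((D:ℝ)+1) ≤ C^2 := by
      rw [← hprod]
      have : C * C' ≤ C * C := mul_le_mul_of_nonneg_left hC'le hCpos.le
      nlinarith
    have h2 : 2 ≤ (2 * Real.pi / ((D:ℝ)+1)) * D := by
      rw [div_mul_eq_mul_div, le_div_iff₀ (by positivity)]
      nlinarith
    calc (2:ℝ) ≤ (2 * Real.pi / ((D:ℝ)+1)) * D := h2
      _ ≤ C^2 * D := by
          apply mul_le_mul_of_nonneg_right h1 (by positivity)
  have hsinφ : 0 < Real.sin φ := Real.sin_pos_of_pos_of_lt_pi hφ0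
    (lt_of_le_of_lt hφ (by linarith [Real.pi_pos]))
  have hcosφ : 0 ≤ Real.cos φ := Real.cos_nonneg_of_mem_Icc ⟨by linarith, hφ⟩
  by_cases hcase : Real.sin φ ≤ C * D * Real.cos φ
  · -- small angle case: sin t ≤ (sin φ / cos φ) cos t
    have hcosφ' : 0 < Real.cos φ := by
      rcases eq_or_lt_of_le hcosφ with h | h
      · exfalso; rw [← h] at hcase; simp at hcase; linarith
      · exact h
    obtain ⟨m, rfl⟩ : ∃ m, D = m + 1 := ⟨D - 1, (Nat.succ_pred_eq_of_pos hD).symm⟩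
    have key : ∀ t ∈ Set.Icc (0:ℝ) φ,
        Real.sin t ^ (m+1) ≤ (Real.sin φ / Real.cos φ) * (Real.sin t ^ m * Real.cos t) := by
      intro t ht
      have hst : 0 ≤ Real.sin t := Real.sin_nonneg_of_nonneg_of_le_pi ht.1
        (by linarith [Real.pi_pos, ht.2])
      have hct : 0 ≤ Real.cos t := Real.cos_nonneg_of_mem_Icc ⟨by linarith [ht.1], by linarith [ht.2]⟩
      have hsub : Real.sin (t - φ) ≤ 0 :=
        Real.sin_nonpos_of_nonpos_of_neg_pi_le (by linarith [ht.2])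
          (by linarith [ht.1, Real.pi_pos])
      rw [Real.sin_sub] at hsub
      have hkey : Real.sin t * Real.cos φ ≤ Real.sin φ * Real.cos t := by nlinarith
      have h1 : Real.sin t ≤ (Real.sin φ / Real.cos φ) * Real.cos t := by
        rw [div_mul_eq_mul_div, le_div_iff₀ hcosφ']
        linarith [hkey]
      calc Real.sin t ^ (m+1) = Real.sin t ^ m * Real.sin t := by ring
        _ ≤ Real.sin t ^ m * ((Real.sin φ / Real.cos φ) * Real.cos t) :=
            mul_le_mul_of_nonneg_left h1 (pow_nonneg hst m)
        _ = (Real.sin φ / Real.cos φ) * (Real.sin t ^ m * Real.cos t) := by ring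
    have hint : (∫ t in (0:ℝ)..φ, Real.sin t ^ (m+1)) ≤
        ∫ t in (0:ℝ)..φ, (Real.sin φ / Real.cos φ) * (Real.sin t ^ m * Real.cos t) := by
      apply intervalIntegral.integral_mono_on hφ0.le
      · exact (Real.continuous_sin.pow _).intervalIntegrable 0 φ
      · exact (continuous_const.mul ((Real.continuous_sin.pow m).mul
          Real.continuous_cos)).intervalIntegrable 0 φ
      · exact key
    have hval : (∫ t in (0:ℝ)..φ, Real.sin t ^ m * Real.cos t) =
        Real.sin φ ^ (m+1) / ((m:ℝ)+1) := by
      have := integral_sin_pow_mul_cos_pow_odd (a := 0) (b := φ) m 0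
      simp only [mul_zero, zero_add, pow_one, pow_zero, mul_one, Real.sin_zero] at this
      rw [this, integral_pow]
      simp
    calc (∫ t in (0:ℝ)..φ, Real.sin t ^ (m+1))
        ≤ ∫ t in (0:ℝ)..φ, (Real.sin φ / Real.cos φ) * (Real.sin t ^ m * Real.cos t) := hint
      _ = (Real.sin φ / Real.cos φ) * (Real.sin φ ^ (m+1) / ((m:ℝ)+1)) := by
          rw [intervalIntegral.integral_const_mul, hval]
      _ ≤ C * Real.sin φ ^ (m+1) := by
          have hm1 : (0:ℝ) < (m:ℝ)+1 := by positivity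
          have hDcast : ((m+1 : ℕ):ℝ) = (m:ℝ)+1 := by push_cast; ring
          rw [hDcast] at hcase
          have h1 : Real.sin φ / Real.cos φ ≤ C * ((m:ℝ)+1) := by
            rw [div_le_iff₀ hcosφ']
            nlinarith
          have hpow : 0 ≤ Real.sin φ ^ (m+1) := pow_nonneg hsinφ.le _
          calc (Real.sin φ / Real.cos φ) * (Real.sin φ ^ (m+1) / ((m:ℝ)+1))
              ≤ (C * ((m:ℝ)+1)) * (Real.sin φ ^ (m+1) / ((m:ℝ)+1)) := by
                apply mul_le_mul_of_nonneg_right h1 (by positivity)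
            _ = C * Real.sin φ ^ (m+1) := by field_simp
  · -- large angle: sin^D φ ≥ 1/2
    push_neg at hcase
    have hcos2 : Real.cos φ ^ 2 * (C^2 * (D:ℝ)^2) < 1 := by
      have h1 : (C * D * Real.cos φ)^2 < Real.sin φ ^ 2 := by
        have hCD : 0 ≤ C * D * Real.cos φ := by positivity
        nlinarith
      have h2 : Real.sin φ ^ 2 ≤ 1 := by
        nlinarith [Real.sin_le_one φ, hsinφ]
      nlinarith
    have hDpos : (0:ℝ) < (D:ℝ) := by exact_mod_cast hD
    have hhalf : (1:ℝ)/2 ≤ Real.sin φ ^ D := by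
      -- D * cos² φ < 1/2
      have hDc : (D:ℝ) * Real.cos φ ^ 2 < 1/2 := by
        have hx : (0:ℝ) ≤ (D:ℝ) * Real.cos φ ^ 2 := by positivity
        have h3 : 2 * ((D:ℝ) * Real.cos φ ^ 2) ≤ (C^2 * D) * ((D:ℝ) * Real.cos φ ^ 2) :=
          mul_le_mul_of_nonneg_right hCCD hx
        nlinarith [h3, hcos2]
      have hbern : 1 - (D:ℝ) * Real.cos φ ^ 2 ≤ (1 - Real.cos φ ^ 2)^D := by
        have := one_add_mul_le_pow (a := -(Real.cos φ ^ 2))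
          (by nlinarith [Real.cos_sq_le_one φ]) D
        calc 1 - (D:ℝ) * Real.cos φ ^ 2 = 1 + (D:ℝ) * (-(Real.cos φ ^ 2)) := by ring
          _ ≤ (1 + -(Real.cos φ ^2))^D := this
          _ = (1 - Real.cos φ ^2)^D := by ring_nf
      have hsq : (1 - Real.cos φ ^ 2)^D = Real.sin φ ^ (2*D) := by
        rw [← Real.sin_sq φ, ← pow_mul]
      have hmono : Real.sin φ ^ (2*D) ≤ Real.sin φ ^ D :=
        pow_le_pow_of_le_one hsinφ.le (Real.sin_le_one φ) (by omega)
      have h4 := hsq ▸ hbern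
      linarith [h4, hmono, hDc]
    -- ∫₀^φ ≤ ∫₀^{π/2} = C/2
    have hsplit : (∫ t in (0:ℝ)..φ, Real.sin t ^ D) ≤
        ∫ t in (0:ℝ)..(Real.pi/2), Real.sin t ^ D := by
      have hadd : (∫ t in (0:ℝ)..φ, Real.sin t ^ D) +
          (∫ t in φ..(Real.pi/2), Real.sin t ^ D) =
          ∫ t in (0:ℝ)..(Real.pi/2), Real.sin t ^ D :=
        intervalIntegral.integral_add_adjacent_intervals
          ((Real.continuous_sin.pow _).intervalIntegrable 0 φ)
          ((Real.continuous_sin.pow _).intervalIntegrable φ (Real.pi/2))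
      have hnn : 0 ≤ ∫ t in φ..(Real.pi/2), Real.sin t ^ D := by
        apply intervalIntegral.integral_nonneg hφ
        intro u hu
        exact pow_nonneg (Real.sin_nonneg_of_nonneg_of_le_pi (by linarith [hu.1])
          (by linarith [hu.2, Real.pi_pos])) _
      linarith
    have hhalfint : (∫ t in (0:ℝ)..(Real.pi/2), Real.sin t ^ D) = C / 2 := by
      have hsym : (∫ t in (Real.pi/2)..Real.pi, Real.sin t ^ D) =
          ∫ t in (0:ℝ)..(Real.pi/2), Real.sin t ^ D := by
        have h1 : (∫ t in (Real.pi/2)..Real.pi, Real.sin t ^ D) =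
            ∫ t in (Real.pi/2)..Real.pi, Real.sin (Real.pi - t) ^ D := by
          congr 1; ext t; rw [Real.sin_pi_sub]
        rw [h1, intervalIntegral.integral_comp_sub_left (fun x => Real.sin x ^ D) Real.pi]
        rw [show Real.pi - Real.pi/2 = Real.pi/2 by ring, show Real.pi - Real.pi = 0 by ring]
      have hadd : (∫ t in (0:ℝ)..(Real.pi/2), Real.sin t ^ D) +
          (∫ t in (Real.pi/2)..Real.pi, Real.sin t ^ D) =
          ∫ t in (0:ℝ)..Real.pi, Real.sin t ^ D :=
        intervalIntegral.integral_add_adjacent_intervals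
          ((Real.continuous_sin.pow _).intervalIntegrable 0 (Real.pi/2))
          ((Real.continuous_sin.pow _).intervalIntegrable (Real.pi/2) Real.pi)
      rw [hC] at hadd
      linarith [hsym ▸ hadd]
    calc (∫ t in (0:ℝ)..φ, Real.sin t ^ D) ≤ C / 2 := hhalfint ▸ hsplit
      _ ≤ C * Real.sin φ ^ D := by
          have := mul_le_mul_of_nonneg_left hhalf hCpos.le
          linarith
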